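/- Log-supermodularity of the smooth-ambiguity local utility: suppose φ₁ : ℝ × Θ → ℝ₊ is log-supermodular (in (value, θ)), f(s;λ) is a family of densities log-supermodular in (s,λ), π(λ) ≥ 0, and γ : S → ℝ is increasing with m(λ) := ∫γ(t)f(t;λ)dt increasing in λ. Then ū(s,θ) := ∫₀¹ φ₁(m(λ), θ) f(s;λ) π(λ) dλ is log-supermodular in (s,θ). -/
import Mathlib


open MeasureTheory

/-- Correlation-type inequality: if `A x * B y + B x * A y ≤ C x * D y + D x * C y`
pointwise, then `∫A * ∫B ≤ ∫C * ∫D`. -/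
lemma aux_corr {μ : Measure ℝ} {A B C D : ℝ → ℝ}
    (hA : Integrable A μ) (hB : Integrable B μ)
    (hC : Integrable C μ) (hD : Integrable D μ)
    (h : ∀ x y, A x * B y + B x * A y ≤ C x * D y + D x * C y) :
    (∫ x, A x ∂μ) * (∫ x, B x ∂μ) ≤ (∫ x, C x ∂μ) * (∫ x, D x ∂μ) := by
  have step : ∀ x, A x * ∫ y, B y ∂μ + B x * ∫ y, A y ∂μ
      ≤ C x * ∫ y, D y ∂μ + D x * ∫ y, C y ∂μ := by
    intro x
    have h1 : ∫ y, (A x * B y + B x * A y) ∂μ ≤ ∫ y, (C x * D y + D x * C y) ∂μ :=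
      integral_mono ((hB.const_mul _).add (hA.const_mul _))
        ((hD.const_mul _).add (hC.const_mul _)) (fun y => h x y)
    rwa [integral_add (hB.const_mul _) (hA.const_mul _),
      integral_add (hD.const_mul _) (hC.const_mul _),
      integral_const_mul _ _, integral_const_mul _ _, integral_const_mul _ _,
      integral_const_mul _ _] at h1
  have h2 : ∫ x, (A x * ∫ y, B y ∂μ + B x * ∫ y, A y ∂μ) ∂μ
      ≤ ∫ x, (C x * ∫ y, D y ∂μ + D x * ∫ y, C y ∂μ) ∂μ :=
    integral_mono ((hA.mul_const _).add (hB.mul_const _))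
      ((hC.mul_const _).add (hD.mul_const _)) step
  rw [integral_add (hA.mul_const _) (hB.mul_const _),
    integral_add (hC.mul_const _) (hD.mul_const _),
    integral_mul_const _ _, integral_mul_const _ _, integral_mul_const _ _,
    integral_mul_const _ _] at h2
  nlinarith [h2]

/-- Log-supermodularity of the smooth-ambiguity local utility
`ū(s,θ) = ∫₀¹ φ₁(m(λ),θ) f(s;λ) π(λ) dλ` when `φ₁` and `f` are nonnegative
log-supermodular, `π ≥ 0`, `γ` is increasing, and `m(λ) = ∫ γ f(·;λ)` is
increasing. -/
theorem stmt_17 (φ₁ : ℝ → ℝ → ℝ) (f : ℝ → ℝ → ℝ) (π : ℝ → ℝ) (γ : ℝ → ℝ)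
    (hφpos : ∀ v θ, 0 ≤ φ₁ v θ)
    (hφspm : ∀ v v' θ θ' : ℝ, v ≤ v' → θ ≤ θ' →
      φ₁ v' θ * φ₁ v θ' ≤ φ₁ v' θ' * φ₁ v θ)
    (hfpos : ∀ s lam, 0 ≤ f s lam)
    (hfspm : ∀ s s' lam lam' : ℝ, s ≤ s' → lam ≤ lam' →
      f s' lam * f s lam' ≤ f s' lam' * f s lam)
    (hπ : ∀ lam, 0 ≤ π lam)
    (hγ : Monotone γ)
    (m : ℝ → ℝ) (hm : ∀ lam, m lam = ∫ t, γ t * f t lam)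
    (hmmono : Monotone m)
    (hint : ∀ s θ : ℝ, IntervalIntegrable
      (fun lam => φ₁ (m lam) θ * f s lam * π lam) volume 0 1) :
    ∀ s s' θ θ' : ℝ, s ≤ s' → θ ≤ θ' →
      (∫ lam in (0:ℝ)..1, φ₁ (m lam) θ * f s' lam * π lam)
          * (∫ lam in (0:ℝ)..1, φ₁ (m lam) θ' * f s lam * π lam)
        ≤ (∫ lam in (0:ℝ)..1, φ₁ (m lam) θ' * f s' lam * π lam)
          * (∫ lam in (0:ℝ)..1, φ₁ (m lam) θ * f s lam * π lam) := by
  intro s s' θ θ' hs hθ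
  set A : ℝ → ℝ := fun lam => φ₁ (m lam) θ * f s' lam * π lam with hAdef
  set B : ℝ → ℝ := fun lam => φ₁ (m lam) θ' * f s lam * π lam with hBdef
  set C : ℝ → ℝ := fun lam => φ₁ (m lam) θ' * f s' lam * π lam with hCdef
  set D : ℝ → ℝ := fun lam => φ₁ (m lam) θ * f s lam * π lam with hDdef
  have hA : IntegrableOn A (Set.Ioc (0:ℝ) 1) volume := (hint s' θ).1
  have hB : IntegrableOn B (Set.Ioc (0:ℝ) 1) volume := (hint s θ').1
  have hC : IntegrableOn C (Set.Ioc (0:ℝ) 1) volume := (hint s' θ').1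
  have hD : IntegrableOn D (Set.Ioc (0:ℝ) 1) volume := (hint s θ).1
  have key : ∀ x y : ℝ, x ≤ y → A x * B y + B x * A y ≤ C x * D y + D x * C y := by
    intro x y hxy
    have hmxy : m x ≤ m y := hmmono hxy
    have hφ : φ₁ (m y) θ * φ₁ (m x) θ' ≤ φ₁ (m y) θ' * φ₁ (m x) θ :=
      hφspm _ _ _ _ hmxy hθ
    have hf : f s' x * f s y ≤ f s' y * f s x := hfspm s s' x y hs hxy
    have hππ : 0 ≤ π x * π y := mul_nonneg (hπ x) (hπ y)
    have hkey : 0 ≤ (π x * π y) *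
        ((φ₁ (m x) θ * φ₁ (m y) θ' - φ₁ (m x) θ' * φ₁ (m y) θ) *
          (f s x * f s' y - f s' x * f s y)) := by
      apply mul_nonneg hππ
      apply mul_nonneg <;> nlinarith
    simp only [hAdef, hBdef, hCdef, hDdef]
    nlinarith [hkey]
  have key' : ∀ x y : ℝ, A x * B y + B x * A y ≤ C x * D y + D x * C y := by
    intro x y
    rcases le_total x y with hxy | hyx
    · exact key x y hxy
    · have := key y x hyx
      nlinarith [this]
  have main := aux_corr (μ := volume.restrict (Set.Ioc (0:ℝ) 1)) hA hB hC hD key'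
  rw [intervalIntegral.integral_of_le (zero_le_one), intervalIntegral.integral_of_le (zero_le_one),
    intervalIntegral.integral_of_le (zero_le_one), intervalIntegral.integral_of_le (zero_le_one)]
  exact main
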